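/- If B is a quasi-greedy basis with quasi-greedy constant K in a Banach space X, then the function μ(N) = sup_{1≤k≤N} h_r(k)/h_l(k) is doubling: μ(2N) ≤ 2K²·μ(N) for all N ≥ 1. -/

import Mathlib

open Finset Filter

/-- A (seminormalized Schauder) basis of a real normed space, given by the basis
vectors `e k` together with the coefficient functionals `coeff k`. -/
structure QGBasis (X : Type*) [NormedAddCommGroup X] [NormedSpace ℝ X] where
  e : ℕ → X
  coeff : ℕ → X → ℝ
  coeff_add : ∀ k x y, coeff k (x + y) = coeff k x + coeff k y
  coeff_smul : ∀ (k : ℕ) (c : ℝ) (x : X), coeff k (c • x) = c * coeff k x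
  coeff_e : ∀ j k, coeff j (e k) = if j = k then 1 else 0
  expansion : ∀ x : X,
    Tendsto (fun N => ∑ k ∈ Finset.range N, coeff k x • e k) atTop (nhds x)
  c_norm : ℝ
  C_norm : ℝ
  c_norm_pos : 0 < c_norm
  norm_e_ge : ∀ k, c_norm ≤ ‖e k‖
  norm_e_le : ∀ k, ‖e k‖ ≤ C_norm

namespace QGBasis

variable {X : Type*} [NormedAddCommGroup X] [NormedSpace ℝ X] (B : QGBasis X)

/-- `π` enumerates the coefficients of `x` in decreasing order of modulus;
position `k` (zero-based) carries the `(k+1)`-st largest coefficient. -/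
def IsGreedyPerm (x : X) (π : ℕ → ℕ) : Prop :=
  Function.Bijective π ∧ ∀ k, |B.coeff (π (k + 1)) x| ≤ |B.coeff (π k) x|

/-- The thresholding greedy approximation of order `N` associated to the
greedy enumeration `π`. -/
def G (π : ℕ → ℕ) (N : ℕ) (x : X) : X :=
  ∑ k ∈ Finset.range N, B.coeff (π k) x • B.e (π k)

/-- `B` is quasi-greedy with constant `K`. -/
def QuasiGreedyWith (K : ℝ) : Prop :=
  ∀ (x : X) (π : ℕ → ℕ), B.IsGreedyPerm x π → ∀ N,
    ‖B.G π N x‖ ≤ K * ‖x‖ ∧ ‖x - B.G π N x‖ ≤ K * ‖x‖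

/-- Coordinate projection onto the index set `Γ`. -/
def S (Γ : Finset ℕ) (x : X) : X := ∑ k ∈ Γ, B.coeff k x • B.e k

/-- Right democracy function. -/
noncomputable def hr (N : ℕ) : ℝ :=
  sSup {r | ∃ Γ : Finset ℕ, Γ.card = N ∧ r = ‖∑ k ∈ Γ, B.e k‖}

/-- Left democracy function. -/
noncomputable def hl (N : ℕ) : ℝ :=
  sInf {r | ∃ Γ : Finset ℕ, Γ.card = N ∧ r = ‖∑ k ∈ Γ, B.e k‖}

/-- The democracy ratio `μ(N) = sup_{1 ≤ k ≤ N} h_r(k)/h_l(k)`. -/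
noncomputable def mu (N : ℕ) : ℝ :=
  sSup {r | ∃ k, 1 ≤ k ∧ k ≤ N ∧ r = B.hr k / B.hl k}

/-- Best `N`-term approximation error. -/
noncomputable def sigma (N : ℕ) (x : X) : ℝ :=
  sInf {r | ∃ (Γ : Finset ℕ) (b : ℕ → ℝ),
    Γ.card ≤ N ∧ r = ‖x - ∑ k ∈ Γ, b k • B.e k‖}

/-- `Γ` is a greedy set for `x`: every coefficient inside dominates every
coefficient outside. -/
def IsGreedySet (x : X) (Γ : Finset ℕ) : Prop :=
  ∀ j ∈ Γ, ∀ i ∉ Γ, |B.coeff i x| ≤ |B.coeff j x|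

lemma coeff_sum_e (j : ℕ) (Γ : Finset ℕ) :
    B.coeff j (∑ k ∈ Γ, B.e k) = if j ∈ Γ then 1 else 0 := by
  classical
  have h := map_sum (AddMonoidHom.mk' (B.coeff j) (B.coeff_add j)) B.e Γ
  simp only [AddMonoidHom.mk'_apply] at h
  rw [h]
  simp only [B.coeff_e]
  exact Finset.sum_ite_eq Γ j fun _ => 1

lemma proj_le {K : ℝ} (hK : B.QuasiGreedyWith K) {Γ' Γ : Finset ℕ} (hsub : Γ' ⊆ Γ) :
    ‖∑ k ∈ Γ', B.e k‖ ≤ K * ‖∑ k ∈ Γ, B.e k‖ := by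
  classical
  set x := ∑ k ∈ Γ, B.e k with hx
  set m := Γ'.card with hm
  set n := Γ.card with hn
  have hmn : m ≤ n := Finset.card_le_card hsub
  set L : List ℕ := Γ'.sort (· ≤ ·) ++ (Γ \ Γ').sort (· ≤ ·) with hLdef
  have hlen1 : (Γ'.sort (· ≤ ·)).length = m := Finset.length_sort _
  have hlen : L.length = n := by
    simp only [hLdef, List.length_append, Finset.length_sort]
    rw [Finset.card_sdiff_of_subset hsub]; omega
  have hLmem : ∀ a ∈ L, a ∈ Γ := by
    intro a ha
    rcases List.mem_append.1 ha with h | h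
    · exact hsub (Finset.mem_sort _ |>.1 h)
    · exact (Finset.mem_sdiff.1 (Finset.mem_sort _ |>.1 h)).1
  have hLnodup : L.Nodup := by
    refine List.Nodup.append (Finset.sort_nodup _ _) (Finset.sort_nodup _ _) ?_
    intro a ha hb
    have h1 := (Finset.mem_sort _).1 ha
    have h2 := Finset.mem_sdiff.1 ((Finset.mem_sort _).1 hb)
    exact h2.2 h1
  have hinf : {j : ℕ | ¬ j ∈ Γ}.Infinite := by
    have : ({j : ℕ | ¬ j ∈ Γ} : Set ℕ) = (↑Γ)ᶜ := rfl
    rw [this]; exact (Γ.finite_toSet).infinite_compl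
  set π : ℕ → ℕ := fun k =>
    if h : k < n then L.get ⟨k, by omega⟩ else Nat.nth (fun j => ¬ j ∈ Γ) (k - n) with hπ
  have hπlt : ∀ k (h : k < n), π k = L.get ⟨k, by omega⟩ := by
    intro k h; simp only [hπ, dif_pos h]
  have hπge : ∀ k, n ≤ k → π k = Nat.nth (fun j => ¬ j ∈ Γ) (k - n) := by
    intro k h; simp only [hπ]; rw [dif_neg (by omega)]
  have hπmemΓ : ∀ k, k < n → π k ∈ Γ := by
    intro k h; rw [hπlt k h]; exact hLmem _ (L.get_mem _)
  have hπnotmem : ∀ k, n ≤ k → π k ∉ Γ := by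
    intro k h; rw [hπge k h]; exact Nat.nth_mem_of_infinite hinf _
  have hπmemΓ' : ∀ k (h : k < m), π k ∈ Γ' := by
    intro k h
    rw [hπlt k (by omega)]
    have : L.get ⟨k, by omega⟩ = (Γ'.sort (· ≤ ·)).get ⟨k, by omega⟩ := by
      simp only [List.get_eq_getElem, hLdef]
      exact List.getElem_append_left (by omega)
    rw [this]
    exact (Finset.mem_sort _).1 (List.get_mem _ _)
  have hbij : Function.Bijective π := by
    constructor
    · intro a b hab
      by_cases ha : a < n <;> by_cases hb : b < n
      · rw [hπlt a ha, hπlt b hb] at hab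
        have h2 := List.nodup_iff_injective_get.1 hLnodup hab
        exact congrArg Fin.val h2
      · exact absurd hab (by
          have h1 := hπmemΓ a ha
          have h2 := hπnotmem b (by omega)
          intro h; rw [h] at h1; exact h2 h1)
      · exact absurd hab (by
          have h1 := hπmemΓ b hb
          have h2 := hπnotmem a (by omega)
          intro h; rw [← h] at h1; exact h2 h1)
      · rw [hπge a (by omega), hπge b (by omega)] at hab
        have := Nat.nth_injective hinf hab
        omega
    · intro j
      by_cases hj : j ∈ Γ
      · have : j ∈ L := by
          rcases Finset.mem_union.1 (by rwa [Finset.union_sdiff_of_subset hsub] : j ∈ Γ' ∪ (Γ \ Γ')) with h | h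
          · exact List.mem_append.2 (Or.inl ((Finset.mem_sort _).2 h))
          · exact List.mem_append.2 (Or.inr ((Finset.mem_sort _).2 h))
        obtain ⟨i, hi⟩ := List.mem_iff_get.1 this
        exact ⟨i, by rw [hπlt i (by omega)]; convert hi⟩
      · have : j ∈ Set.range (Nat.nth (fun j => ¬ j ∈ Γ)) := by
          rw [Nat.range_nth_of_infinite hinf]; exact hj
        obtain ⟨i, hi⟩ := this
        exact ⟨i + n, by rw [hπge _ (by omega)]; simpa using hi⟩
  have hcoeff : ∀ k, B.coeff (π k) x = if k < n then 1 else 0 := by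
    intro k
    rw [hx, coeff_sum_e]
    by_cases h : k < n
    · rw [if_pos (hπmemΓ k h), if_pos h]
    · rw [if_neg (hπnotmem k (by omega)), if_neg h]
  have hgp : B.IsGreedyPerm x π := by
    refine ⟨hbij, fun k => ?_⟩
    rw [hcoeff, hcoeff]
    split_ifs with h1 h2 <;> simp <;> omega
  have hG : B.G π m x = ∑ k ∈ Γ', B.e k := by
    rw [G]
    have h1 : ∀ k ∈ Finset.range m, B.coeff (π k) x • B.e (π k) = B.e (π k) := by
      intro k hk
      rw [hcoeff, if_pos (by have := Finset.mem_range.1 hk; omega), one_smul]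
    rw [Finset.sum_congr rfl h1]
    refine Finset.sum_bij (fun k hk => π k) ?_ ?_ ?_ ?_
    · intro k hk; exact hπmemΓ' k (Finset.mem_range.1 hk)
    · intro a ha b hb hab; exact hbij.1 hab
    · intro j hj
      have : j ∈ Γ'.sort (· ≤ ·) := (Finset.mem_sort _).2 hj
      obtain ⟨i, hi⟩ := List.mem_iff_get.1 this
      refine ⟨i, Finset.mem_range.2 (by have := i.2; omega), ?_⟩
      show π (i : ℕ) = j
      rw [hπlt i (by have := i.2; omega)]
      rw [← hi]
      simp only [List.get_eq_getElem, hLdef]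
      exact (List.getElem_append_left (by have := i.2; omega))
    · intros; rfl
  calc ‖∑ k ∈ Γ', B.e k‖ = ‖B.G π m x‖ := by rw [hG]
    _ ≤ K * ‖x‖ := (hK x π hgp m).1

lemma one_le_const {K : ℝ} (hK : B.QuasiGreedyWith K) : 1 ≤ K := by
  have hgp : B.IsGreedyPerm (B.e 0) id := by
    refine ⟨Function.bijective_id, fun k => ?_⟩
    simp only [id, B.coeff_e]
    rw [if_neg (by omega)]
    simp [abs_nonneg]
  have h := (hK (B.e 0) id hgp 0).2
  simp only [G, Finset.range_zero, Finset.sum_empty, sub_zero] at h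
  have he : 0 < ‖B.e 0‖ := lt_of_lt_of_le B.c_norm_pos (B.norm_e_ge 0)
  nlinarith

lemma Dset_nonempty (k : ℕ) :
    {r | ∃ Γ : Finset ℕ, Γ.card = k ∧ r = ‖∑ j ∈ Γ, B.e j‖}.Nonempty :=
  ⟨_, Finset.range k, Finset.card_range k, rfl⟩

lemma Dset_bddAbove (k : ℕ) :
    BddAbove {r | ∃ Γ : Finset ℕ, Γ.card = k ∧ r = ‖∑ j ∈ Γ, B.e j‖} := by
  refine ⟨k * B.C_norm, ?_⟩
  rintro r ⟨Γ, hΓ, rfl⟩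
  refine (norm_sum_le _ _).trans ?_
  calc ∑ j ∈ Γ, ‖B.e j‖ ≤ ∑ j ∈ Γ, B.C_norm :=
        Finset.sum_le_sum fun j _ => B.norm_e_le j
    _ = k * B.C_norm := by rw [Finset.sum_const, hΓ, nsmul_eq_mul]

lemma Dset_bddBelow (k : ℕ) :
    BddBelow {r | ∃ Γ : Finset ℕ, Γ.card = k ∧ r = ‖∑ j ∈ Γ, B.e j‖} := by
  refine ⟨0, ?_⟩
  rintro r ⟨Γ, hΓ, rfl⟩
  exact norm_nonneg _

lemma le_hr {k : ℕ} {Γ : Finset ℕ} (h : Γ.card = k) :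
    ‖∑ j ∈ Γ, B.e j‖ ≤ B.hr k :=
  le_csSup (B.Dset_bddAbove k) ⟨Γ, h, rfl⟩

lemma hl_le {k : ℕ} {Γ : Finset ℕ} (h : Γ.card = k) :
    B.hl k ≤ ‖∑ j ∈ Γ, B.e j‖ :=
  csInf_le (B.Dset_bddBelow k) ⟨Γ, h, rfl⟩

lemma hr_nonneg (k : ℕ) : 0 ≤ B.hr k :=
  le_trans (norm_nonneg _) (B.le_hr (Finset.card_range k))

lemma hl_nonneg (k : ℕ) : 0 ≤ B.hl k := by
  apply Real.sInf_nonneg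
  rintro r ⟨Γ, hΓ, rfl⟩
  exact norm_nonneg _

lemma C_pos : 0 < B.C_norm :=
  lt_of_lt_of_le B.c_norm_pos (le_trans (B.norm_e_ge 0) (B.norm_e_le 0))

lemma hr_le (k : ℕ) : B.hr k ≤ k * B.C_norm := by
  apply Real.sSup_le
  · rintro r ⟨Γ, hΓ, rfl⟩
    refine (norm_sum_le _ _).trans ?_
    calc ∑ j ∈ Γ, ‖B.e j‖ ≤ ∑ j ∈ Γ, B.C_norm :=
          Finset.sum_le_sum fun j _ => B.norm_e_le j
      _ = k * B.C_norm := by rw [Finset.sum_const, hΓ, nsmul_eq_mul]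
  · exact mul_nonneg (Nat.cast_nonneg k) B.C_pos.le

lemma hl_ge {K : ℝ} (hK : B.QuasiGreedyWith K) {k : ℕ} (hk : 1 ≤ k) :
    B.c_norm / K ≤ B.hl k := by
  have hKpos : (0:ℝ) < K := lt_of_lt_of_le one_pos (B.one_le_const hK)
  apply le_csInf (B.Dset_nonempty k)
  rintro r ⟨Γ, hΓ, rfl⟩
  obtain ⟨j, hj⟩ := Finset.card_pos.1 (by omega : 0 < Γ.card)
  have h1 : ‖∑ i ∈ ({j} : Finset ℕ), B.e i‖ ≤ K * ‖∑ i ∈ Γ, B.e i‖ :=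
    B.proj_le hK (Finset.singleton_subset_iff.2 hj)
  rw [Finset.sum_singleton] at h1
  have h2 := B.norm_e_ge j
  rw [div_le_iff₀ hKpos]
  calc B.c_norm ≤ ‖B.e j‖ := h2
    _ ≤ K * ‖∑ i ∈ Γ, B.e i‖ := h1
    _ = ‖∑ i ∈ Γ, B.e i‖ * K := mul_comm _ _

lemma hl_pos {K : ℝ} (hK : B.QuasiGreedyWith K) {k : ℕ} (hk : 1 ≤ k) :
    0 < B.hl k := by
  have hKpos : (0:ℝ) < K := lt_of_lt_of_le one_pos (B.one_le_const hK)
  exact lt_of_lt_of_le (div_pos B.c_norm_pos hKpos) (B.hl_ge hK hk)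

lemma hr_add (a b : ℕ) : B.hr (a + b) ≤ B.hr a + B.hr b := by
  apply Real.sSup_le
  · rintro r ⟨Γ, hΓ, rfl⟩
    obtain ⟨Γ1, hsub, hc1⟩ := Finset.exists_subset_card_eq (show a ≤ Γ.card by omega)
    have hc2 : (Γ \ Γ1).card = b := by
      rw [Finset.card_sdiff_of_subset hsub]; omega
    have hsplit : ∑ j ∈ Γ, B.e j = ∑ j ∈ Γ1, B.e j + ∑ j ∈ Γ \ Γ1, B.e j := by
      rw [← Finset.sum_sdiff hsub]; abel
    rw [hsplit]
    calc ‖∑ j ∈ Γ1, B.e j + ∑ j ∈ Γ \ Γ1, B.e j‖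
        ≤ ‖∑ j ∈ Γ1, B.e j‖ + ‖∑ j ∈ Γ \ Γ1, B.e j‖ := norm_add_le _ _
      _ ≤ B.hr a + B.hr b := add_le_add (B.le_hr hc1) (B.le_hr hc2)
  · exact add_nonneg (B.hr_nonneg a) (B.hr_nonneg b)

lemma hl_mono_K {K : ℝ} (hK : B.QuasiGreedyWith K) {a k : ℕ} (hak : a ≤ k) :
    B.hl a ≤ K * B.hl k := by
  have hKpos : (0:ℝ) < K := lt_of_lt_of_le one_pos (B.one_le_const hK)
  have key : B.hl a / K ≤ B.hl k := by
    apply le_csInf (B.Dset_nonempty k)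
    rintro r ⟨Γ, hΓ, rfl⟩
    obtain ⟨Γ', hsub, hc⟩ := Finset.exists_subset_card_eq (show a ≤ Γ.card by omega)
    have h1 := B.hl_le hc
    have h2 := B.proj_le hK hsub
    rw [div_le_iff₀ hKpos]
    calc B.hl a ≤ ‖∑ j ∈ Γ', B.e j‖ := h1
      _ ≤ K * ‖∑ j ∈ Γ, B.e j‖ := h2
      _ = ‖∑ j ∈ Γ, B.e j‖ * K := mul_comm _ _
  rw [div_le_iff₀ hKpos] at key
  linarith [key]

lemma mu_bddAbove {K : ℝ} (hK : B.QuasiGreedyWith K) (N : ℕ) :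
    BddAbove {r | ∃ k, 1 ≤ k ∧ k ≤ N ∧ r = B.hr k / B.hl k} := by
  have hKpos : (0:ℝ) < K := lt_of_lt_of_le one_pos (B.one_le_const hK)
  refine ⟨(N * B.C_norm) / (B.c_norm / K), ?_⟩
  rintro r ⟨k, hk1, hkN, rfl⟩
  refine div_le_div₀ (mul_nonneg (Nat.cast_nonneg N) B.C_pos.le) ?_ (div_pos B.c_norm_pos hKpos) (B.hl_ge hK hk1)
  calc B.hr k ≤ k * B.C_norm := B.hr_le k
    _ ≤ N * B.C_norm := by
        have := B.C_pos
        have : (k : ℝ) ≤ N := by exact_mod_cast hkN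
        nlinarith [B.C_pos]

lemma le_mu {K : ℝ} (hK : B.QuasiGreedyWith K) {k N : ℕ} (hk1 : 1 ≤ k) (hkN : k ≤ N) :
    B.hr k / B.hl k ≤ B.mu N :=
  le_csSup (B.mu_bddAbove hK N) ⟨k, hk1, hkN, rfl⟩

lemma mu_nonneg (N : ℕ) : 0 ≤ B.mu N := by
  apply Real.sSup_nonneg
  rintro r ⟨k, _, _, rfl⟩
  exact div_nonneg (B.hr_nonneg k) (B.hl_nonneg k)


end QGBasis

/-- the democracy ratio of a quasi-greedy basis is doubling:
`μ(2N) ≤ 2K² μ(N)`. -/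
theorem stmt6 {X : Type*} [NormedAddCommGroup X] [NormedSpace ℝ X] [CompleteSpace X]
    (B : QGBasis X) (K : ℝ) (hK : B.QuasiGreedyWith K)
    (N : ℕ) (hN : 1 ≤ N) :
    B.mu (2 * N) ≤ 2 * K ^ 2 * B.mu N := by
  have hK1 := B.one_le_const hK
  have hKpos : (0:ℝ) < K := by linarith
  have hmuN : 0 ≤ B.mu N := B.mu_nonneg N
  have hbound : 0 ≤ 2 * K ^ 2 * B.mu N := by positivity
  rw [QGBasis.mu]
  apply Real.sSup_le _ hbound
  rintro r ⟨k, hk1, hk2, rfl⟩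
  by_cases hkN : k ≤ N
  · have h := B.le_mu hK hk1 hkN
    have hK2 : (0:ℝ) ≤ 2 * K ^ 2 - 1 := by nlinarith
    nlinarith [mul_nonneg hmuN hK2]
  · set a := k / 2 with ha
    set b := k - a with hb
    have hab : a + b = k := by omega
    have ha1 : 1 ≤ a := by omega
    have haN : a ≤ N := by omega
    have hb1 : 1 ≤ b := by omega
    have hbN : b ≤ N := by omega
    have hlk_pos : 0 < B.hl k := B.hl_pos hK hk1
    have hla_pos : 0 < B.hl a := B.hl_pos hK ha1
    have hlb_pos : 0 < B.hl b := B.hl_pos hK hb1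
    have h1 : B.hr k ≤ B.hr a + B.hr b := hab ▸ B.hr_add a b
    have h2 : B.hl a ≤ K * B.hl k := B.hl_mono_K hK (by omega)
    have h3 : B.hl b ≤ K * B.hl k := B.hl_mono_K hK (by omega)
    have h4 : B.hr a / B.hl a ≤ B.mu N := B.le_mu hK ha1 haN
    have h5 : B.hr b / B.hl b ≤ B.mu N := B.le_mu hK hb1 hbN
    have h6 : B.hr a ≤ B.mu N * (K * B.hl k) := by
      have := (div_le_iff₀ hla_pos).1 h4
      nlinarith [B.hr_nonneg a]
    have h7 : B.hr b ≤ B.mu N * (K * B.hl k) := by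
      have := (div_le_iff₀ hlb_pos).1 h5
      nlinarith [B.hr_nonneg b]
    rw [div_le_iff₀ hlk_pos]
    nlinarith [mul_nonneg (mul_nonneg (mul_nonneg hmuN hlk_pos.le) hKpos.le)
      (by linarith : (0:ℝ) ≤ K - 1)]
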